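/- Let X be a set with a well-ordering ≤, let ≤_lex be the induced lexicographic term ordering of X^⋄, and let ⪯ be the symmetric cancellation ordering corresponding to the full symmetric group 𝔖_X and ≤_lex. Let v, w be monomials with v ⪯ w. Then: (a) every σ ∈ 𝔖_X witnessing v ⪯ w satisfies σ(X^{≤|v|}) ⊆ X^{≤|w|}; and (b) if the order type of (X, ≤) is at most ω, then there exists a witness σ for v ⪯ w with the additional property that σ(x) = x for all x > |w|. -/

import Mathlib

/-- A quasi-ordering (here: any binary relation) `r` on `S` is a well-quasi-ordering if
every infinite sequence is good, i.e. there are `i < j` with `r (f i) (f j)`. -/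
def IsWQO {S : Type*} (r : S → S → Prop) : Prop :=
  ∀ f : ℕ → S, ∃ i j : ℕ, i < j ∧ r (f i) (f j)

/-- A term ordering of the monoid of monomials `X →₀ ℕ`: a linear order which is
well-founded, with `1 ≤ x` for every indeterminate `x`, and compatible with
multiplication by indeterminates. -/
def IsTermOrder {X : Type*} (r : (X →₀ ℕ) → (X →₀ ℕ) → Prop) : Prop :=
  IsLinearOrder (X →₀ ℕ) r ∧
  WellFounded (fun v w : X →₀ ℕ => r v w ∧ v ≠ w) ∧
  (∀ x : X, r 0 (Finsupp.single x 1)) ∧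
  (∀ (v w : X →₀ ℕ) (x : X), r v w → r (Finsupp.single x 1 + v) (Finsupp.single x 1 + w))

/-- The symmetric cancellation ordering corresponding to a permutation group `G` on `X`
and a term ordering `r` of the monomials `X →₀ ℕ`:  `v ⪯ w` iff `r v w` and there are
`σ ∈ G` and a monomial `u` with `w = u·σv` and `u·σv' ≤ w` for every `v' ≤ v`. -/
def SymCancel {X : Type*} (G : Subgroup (Equiv.Perm X))
    (r : (X →₀ ℕ) → (X →₀ ℕ) → Prop) (v w : X →₀ ℕ) : Prop :=
  r v w ∧ ∃ σ : Equiv.Perm X, σ ∈ G ∧ ∃ u : X →₀ ℕ,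
    w = u + Finsupp.mapDomain (⇑σ) v ∧
    ∀ v' : X →₀ ℕ, r v' v → r (u + Finsupp.mapDomain (⇑σ) v') w

/-- The lexicographic ordering of monomials induced by a linear order on `X`:
`v ≤lex w` iff `v = w` or there is `x` with `v x < w x` and `v y = w y` for all `y > x`. -/
def LexLe {X : Type*} [LinearOrder X] (v w : X →₀ ℕ) : Prop :=
  v = w ∨ ∃ x : X, v x < w x ∧ ∀ y : X, x < y → v y = w y

/-- LexLe cancellation on the left. -/
private lemma lexle_cancel {X : Type*} [LinearOrder X] {u a b : X →₀ ℕ}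
    (h : LexLe (u + a) (u + b)) : LexLe a b := by
  rcases h with h | ⟨z, h1, h2⟩
  · left
    exact add_left_cancel h
  · right
    refine ⟨z, ?_, fun y hy => ?_⟩
    · have := h1
      simp only [Finsupp.add_apply] at this
      omega
    · have := h2 y hy
      simp only [Finsupp.add_apply] at this
      omega

/-- If v' ≤lex v then every element of supp v' is below some element of supp v. -/
private lemma lexle_supp {X : Type*} [LinearOrder X] {v' v : X →₀ ℕ}
    (h : LexLe v' v) : ∀ s ∈ v'.support, ∃ y ∈ v.support, s ≤ y := by
  intro s hs
  rcases h with rfl | ⟨z, h1, h2⟩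
  · exact ⟨s, hs, le_refl s⟩
  · rcases le_or_gt s z with hle | hlt
    · exact ⟨z, Finsupp.mem_support_iff.mpr (by omega), hle⟩
    · refine ⟨s, ?_, le_refl s⟩
      rw [Finsupp.mem_support_iff] at hs ⊢
      rw [← h2 s hlt]
      exact hs

/-- Key lemma: a witness σ satisfies σ x < σ y whenever x < y and y ∈ supp v. -/
private lemma witness_mono {X : Type*} [LinearOrder X] {v : X →₀ ℕ} (σ : Equiv.Perm X)
    (h3 : ∀ v' : X →₀ ℕ, LexLe v' v →
      LexLe (Finsupp.mapDomain (⇑σ) v') (Finsupp.mapDomain (⇑σ) v))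
    {x y : X} (hy : y ∈ v.support) (hxy : x < y) : σ x < σ y := by
  have hvy : v y ≠ 0 := Finsupp.mem_support_iff.mp hy
  set v' : X →₀ ℕ := v + Finsupp.single x 1 - Finsupp.single y 1 with hv'
  have happ : ∀ s : X, v' s = v s + (Finsupp.single x 1) s - (Finsupp.single y 1) s := by
    intro s
    rw [hv', Finsupp.tsub_apply, Finsupp.add_apply]
  have hx' : v' x = v x + 1 := by
    rw [happ x, Finsupp.single_apply, Finsupp.single_apply,
      if_pos rfl, if_neg (ne_of_gt hxy)]
    omega
  have hy' : v' y = v y - 1 := by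
    rw [happ y, Finsupp.single_apply, Finsupp.single_apply,
      if_pos rfl, if_neg (ne_of_lt hxy)]
    omega
  have hother : ∀ s : X, s ≠ x → s ≠ y → v' s = v s := by
    intro s hsx hsy
    rw [happ s, Finsupp.single_apply, Finsupp.single_apply,
      if_neg (fun h => hsx h.symm), if_neg (fun h => hsy h.symm)]
    omega
  have hlex : LexLe v' v := by
    right
    refine ⟨y, ?_, fun s hs => hother s (ne_of_gt (hxy.trans hs)) (ne_of_gt hs)⟩
    rw [hy']; omega
  have hres := h3 v' hlex
  rcases hres with heq | ⟨z, h1, h2⟩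
  · exfalso
    have := Finsupp.mapDomain_injective σ.injective heq
    have := DFunLike.congr_fun this y
    rw [hy'] at this
    omega
  · have hz : z = σ y := by
      have hz' : v' (σ.symm z) < v (σ.symm z) := by
        have e1 : (Finsupp.mapDomain (⇑σ) v') (σ (σ.symm z)) = v' (σ.symm z) :=
          Finsupp.mapDomain_apply σ.injective v' (σ.symm z)
        have e2 : (Finsupp.mapDomain (⇑σ) v) (σ (σ.symm z)) = v (σ.symm z) :=
          Finsupp.mapDomain_apply σ.injective v (σ.symm z)
        rw [Equiv.apply_symm_apply] at e1 e2
        omega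
      have hsy : σ.symm z = y := by
        by_contra hne
        by_cases hsx : σ.symm z = x
        · rw [hsx, hx'] at hz'; omega
        · rw [hother _ hsx hne] at hz'; omega
      rw [← hsy, Equiv.apply_symm_apply]
    by_contra hnot
    have hlt : σ y < σ x := by
      rcases lt_or_eq_of_le (not_lt.mp hnot) with h | h
      · exact h
      · exact absurd (σ.injective h) hxy.ne'
    have := h2 (σ x) (hz ▸ hlt)
    rw [Finsupp.mapDomain_apply σ.injective, Finsupp.mapDomain_apply σ.injective, hx'] at this
    omega

/-- Extend an injection defined on a subset of a finite set B (mapping into B)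
to a permutation fixing the complement of B. -/
private lemma exists_perm_ext {X : Type*} (σ : X → X) (A B : Set X)
    (hB : B.Finite) (hAB : A ⊆ B) (hinj : Set.InjOn σ A) (himg : σ '' A ⊆ B) :
    ∃ τ : Equiv.Perm X, (∀ x ∈ A, τ x = σ x) ∧ ∀ x ∉ B, τ x = x := by
  classical
  have hA : A.Finite := hB.subset hAB
  have h1 : (B \ σ '' A).Finite := hB.diff
  have h2 : (B \ A).Finite := hB.diff
  have hcard : h2.toFinset.card = h1.toFinset.card := by
    rw [← Set.ncard_eq_toFinset_card _ h2, ← Set.ncard_eq_toFinset_card _ h1,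
      Set.ncard_diff hAB hA, Set.ncard_diff himg (hA.image σ),
      Set.ncard_image_of_injOn hinj]
  let e := Finset.equivOfCardEq hcard
  let f : X → X := fun x =>
    if hx : x ∈ A then σ x else
      if hx2 : x ∈ h2.toFinset then (e ⟨x, hx2⟩ : X) else x
  have hfA : ∀ x ∈ A, f x = σ x := fun x hx => dif_pos hx
  have hfBA : ∀ x (hx2 : x ∈ h2.toFinset), f x = (e ⟨x, hx2⟩ : X) := by
    intro x hx2
    have hxA : x ∉ A := ((h2.mem_toFinset).mp hx2).2
    simp only [f, dif_neg hxA, dif_pos hx2]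
  have hfout : ∀ x ∉ B, f x = x := by
    intro x hx
    have hxA : x ∉ A := fun h => hx (hAB h)
    have hx2 : x ∉ h2.toFinset := fun h => hx ((h2.mem_toFinset.mp h).1)
    simp only [f, dif_neg hxA, dif_neg hx2]
  have hmemA : ∀ x ∈ A, f x ∈ σ '' A := fun x hx => (hfA x hx) ▸ ⟨x, hx, rfl⟩
  have hmemBA : ∀ x (hx2 : x ∈ h2.toFinset), f x ∈ B \ σ '' A := by
    intro x hx2
    rw [hfBA x hx2]
    exact h1.mem_toFinset.mp (e ⟨x, hx2⟩).2
  have hbij : Function.Bijective f := by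
    constructor
    · intro a b hab
      by_cases ha : a ∈ A <;> by_cases hb : b ∈ A
      · exact hinj ha hb ((hfA a ha) ▸ (hfA b hb) ▸ hab)
      · exfalso
        by_cases hbB : b ∈ B
        · have hb2 : b ∈ h2.toFinset := h2.mem_toFinset.mpr ⟨hbB, hb⟩
          have hm := hmemBA b hb2
          rw [← hab] at hm
          exact hm.2 (hmemA a ha)
        · have hin : f a ∈ B := himg (hmemA a ha)
          rw [hab, hfout b hbB] at hin
          exact hbB hin
      · exfalso
        by_cases haB : a ∈ B
        · have ha2 : a ∈ h2.toFinset := h2.mem_toFinset.mpr ⟨haB, ha⟩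
          have hm := hmemBA a ha2
          rw [hab] at hm
          exact hm.2 (hmemA b hb)
        · have hin : f b ∈ B := himg (hmemA b hb)
          rw [← hab, hfout a haB] at hin
          exact haB hin
      · by_cases haB : a ∈ B <;> by_cases hbB : b ∈ B
        · have ha2 : a ∈ h2.toFinset := h2.mem_toFinset.mpr ⟨haB, ha⟩
          have hb2 : b ∈ h2.toFinset := h2.mem_toFinset.mpr ⟨hbB, hb⟩
          have : e ⟨a, ha2⟩ = e ⟨b, hb2⟩ := by
            apply Subtype.ext
            rw [← hfBA a ha2, ← hfBA b hb2, hab]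
          exact congrArg Subtype.val (e.injective this)
        · exfalso
          have ha2 : a ∈ h2.toFinset := h2.mem_toFinset.mpr ⟨haB, ha⟩
          have hm := (hmemBA a ha2).1
          rw [hab, hfout b hbB] at hm
          exact hbB hm
        · exfalso
          have hb2 : b ∈ h2.toFinset := h2.mem_toFinset.mpr ⟨hbB, hb⟩
          have hm := (hmemBA b hb2).1
          rw [← hab, hfout a haB] at hm
          exact haB hm
        · rw [hfout a haB, hfout b hbB] at hab
          exact hab
    · intro y
      by_cases hy : y ∈ σ '' A
      · obtain ⟨a, ha, rfl⟩ := hy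
        exact ⟨a, hfA a ha⟩
      · by_cases hyB : y ∈ B
        · have hy1 : y ∈ h1.toFinset := h1.mem_toFinset.mpr ⟨hyB, hy⟩
          refine ⟨(e.symm ⟨y, hy1⟩ : X), ?_⟩
          have ha2 : (e.symm ⟨y, hy1⟩ : X) ∈ h2.toFinset := (e.symm ⟨y, hy1⟩).2
          rw [hfBA _ ha2]
          have h5 : (⟨(e.symm ⟨y, hy1⟩ : X), ha2⟩ : {x // x ∈ h2.toFinset})
              = e.symm ⟨y, hy1⟩ := rfl
          rw [h5, Equiv.apply_symm_apply]
        · exact ⟨y, hfout y hyB⟩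
  refine ⟨Equiv.ofBijective f hbij, hfA, hfout⟩

/-- Let `X` be well-ordered, `≤lex` the induced lexicographic term
ordering, `⪯` the symmetric cancellation ordering for the full symmetric group, and
`v ⪯ w`.  (a) Every witness `σ` of `v ⪯ w` maps `X^{≤|v|}` into `X^{≤|w|}` (expressed:
if `x` is below some element of the support of `v` then `σ x` is below some element of
the support of `w`).  (b) If the order type of `X` is at most `ω` (every element has
finitely many predecessors), there is a witness `σ` of `v ⪯ w` fixing every `x > |w|`
(every `x` strictly above all of the support of `w`). -/
theorem stmt7 {X : Type*} [LinearOrder X] [WellFoundedLT X]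
    (v w : X →₀ ℕ) (hvw : SymCancel (⊤ : Subgroup (Equiv.Perm X)) (LexLe (X := X)) v w) :
    (∀ σ : Equiv.Perm X,
      (LexLe v w ∧ (∃ u : X →₀ ℕ, w = u + Finsupp.mapDomain (⇑σ) v) ∧
        ∀ v' : X →₀ ℕ, LexLe v' v →
          LexLe (Finsupp.mapDomain (⇑σ) v') (Finsupp.mapDomain (⇑σ) v)) →
      ∀ x : X, (∃ y ∈ v.support, x ≤ y) → ∃ z ∈ w.support, σ x ≤ z) ∧
    ((∀ a : X, {x : X | x < a}.Finite) →
      ∃ σ : Equiv.Perm X,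
        (LexLe v w ∧ (∃ u : X →₀ ℕ, w = u + Finsupp.mapDomain (⇑σ) v) ∧
          ∀ v' : X →₀ ℕ, LexLe v' v →
            LexLe (Finsupp.mapDomain (⇑σ) v') (Finsupp.mapDomain (⇑σ) v)) ∧
        ∀ x : X, (∀ z ∈ w.support, z < x) → σ x = x) := by
  classical
  obtain ⟨hlex, σ0, -, u0, hu0, hcond0⟩ := hvw
  have parta : ∀ σ : Equiv.Perm X,
      (LexLe v w ∧ (∃ u : X →₀ ℕ, w = u + Finsupp.mapDomain (⇑σ) v) ∧
        ∀ v' : X →₀ ℕ, LexLe v' v →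
          LexLe (Finsupp.mapDomain (⇑σ) v') (Finsupp.mapDomain (⇑σ) v)) →
      ∀ x : X, (∃ y ∈ v.support, x ≤ y) → ∃ z ∈ w.support, σ x ≤ z := by
    rintro σ ⟨-, ⟨u, hu⟩, h3⟩ x ⟨y, hy, hxy⟩
    refine ⟨σ y, ?_, ?_⟩
    · rw [Finsupp.mem_support_iff, hu, Finsupp.add_apply,
        Finsupp.mapDomain_apply σ.injective]
      have : v y ≠ 0 := Finsupp.mem_support_iff.mp hy
      omega
    · rcases eq_or_lt_of_le hxy with rfl | hlt
      · exact le_refl _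
      · exact le_of_lt (witness_mono σ h3 hy hlt)
  refine ⟨parta, ?_⟩
  intro hfin
  have hcond : ∀ v' : X →₀ ℕ, LexLe v' v →
      LexLe (Finsupp.mapDomain (⇑σ0) v') (Finsupp.mapDomain (⇑σ0) v) := by
    intro v' h
    have := hcond0 v' h
    rw [hu0] at this
    exact lexle_cancel this
  set A : Set X := {x | ∃ y ∈ v.support, x ≤ y} with hAdef
  set B : Set X := {x | ∃ z ∈ w.support, x ≤ z} with hBdef
  have hBfin : B.Finite := by
    have : B ⊆ ⋃ z ∈ (w.support : Set X), {x | x ≤ z} := by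
      rintro x ⟨z, hz, hle⟩
      exact Set.mem_biUnion hz hle
    refine Set.Finite.subset (Set.Finite.biUnion w.support.finite_toSet
      (fun z _ => ?_)) this
    have : {x : X | x ≤ z} ⊆ insert z {x : X | x < z} := by
      intro x hx
      rcases lt_or_eq_of_le hx with h | h
      · exact Set.mem_insert_of_mem _ h
      · exact h ▸ Set.mem_insert _ _
    exact ((hfin z).insert z).subset this
  have hAB : A ⊆ B := by
    rintro x ⟨y, hy, hxy⟩
    obtain ⟨z, hz, hyz⟩ := lexle_supp hlex y hy
    exact ⟨z, hz, hxy.trans hyz⟩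
  have himg : σ0 '' A ⊆ B := by
    rintro _ ⟨x, hx, rfl⟩
    exact parta σ0 ⟨hlex, ⟨u0, hu0⟩, hcond⟩ x hx
  have hinj : Set.InjOn (⇑σ0) A := fun a _ b _ h => σ0.injective h
  obtain ⟨τ, hτA, hτfix⟩ := exists_perm_ext (⇑σ0) A B hBfin hAB hinj himg
  have hτv : ∀ v' : X →₀ ℕ, LexLe v' v →
      Finsupp.mapDomain (⇑τ) v' = Finsupp.mapDomain (⇑σ0) v' := by
    intro v' h
    apply Finsupp.mapDomain_congr
    intro s hs
    exact hτA s (lexle_supp h s hs)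
  have hτveq : Finsupp.mapDomain (⇑τ) v = Finsupp.mapDomain (⇑σ0) v :=
    hτv v (Or.inl rfl)
  refine ⟨τ, ⟨hlex, ⟨u0, by rw [hτveq]; exact hu0⟩, ?_⟩, ?_⟩
  · intro v' h
    rw [hτv v' h, hτveq]
    exact hcond v' h
  · intro x hx
    apply hτfix
    rintro ⟨z, hz, hle⟩
    exact absurd hle (not_le.mpr (hx z hz))
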